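/- Let d ≥ 1, let μ be a probability measure on ℝ^d × ℝ, and let D₁ = ((X₁,Y₁),…,(X_{n₁},Y_{n₁})), D₂ = ((X'₁,Y'₁),…,(X'_{n₂},Y'_{n₂})), and (X,Y) be i.i.d. with law μ. Let G ⊆ [0,1] be a finite set with 0 ∈ G and |G| = K+1. For each τ ∈ G let L_τ, U_τ : (ℝ^d × ℝ)^{n₁} × ℝ^d → [−∞,∞] be measurable, where L₀ ≡ −∞ and U₀ ≡ +∞. Let α ∈ (0,1). Define the empirical coverage p̂(τ) = (1/n₂)·#{ i ≤ n₂ : L_τ(D₁, X'ᵢ) ≤ Y'ᵢ ≤ U_τ(D₁, X'ᵢ) }, and let τ̂ = max{ τ ∈ G : p̂(τ) ≥ 1−α } (well-defined since p̂(0) = 1). Let p(D) = P( L_{τ̂}(D₁, X) ≤ Y ≤ U_{τ̂}(D₁, X) | D₁, D₂ ). Then for every ε > 0, P( p(D) ≤ 1 − α − ε ) ≤ K·exp(−2ε²n₂). -/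

import Mathlib

set_option maxHeartbeats 1000000

open MeasureTheory ProbabilityTheory Real

lemma bern_mgf_core {m : ℝ} (hm0 : 0 ≤ m) (hm1 : m ≤ 1) (t : ℝ) (ht : 0 ≤ t) :
    1 - m + m * exp t ≤ exp (t * m + t ^ 2 / 8) := by
  set D : ℝ → ℝ := fun s => 1 - m + m * exp s with hD_def
  have hD : ∀ s, 0 < D s := by
    intro s
    rcases eq_or_lt_of_le hm0 with h | h
    · simp only [hD_def, ← h]; norm_num
    · have : 0 < m * exp s := mul_pos h (exp_pos s)
      simp only [hD_def]; nlinarith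
  have hD' : ∀ s, HasDerivAt D (m * exp s) s := by
    intro s
    exact ((Real.hasDerivAt_exp s).const_mul m).const_add (1 - m)
  set g : ℝ → ℝ := fun s => s * m + s ^ 2 / 8 - Real.log (D s) with hg_def
  set h : ℝ → ℝ := fun s => m + s / 4 - m * exp s / D s with hh_def
  have hg' : ∀ s, HasDerivAt g (h s) s := by
    intro s
    have h1 : HasDerivAt (fun s : ℝ => s * m + s ^ 2 / 8) (m + s / 4) s := by
      have := ((hasDerivAt_pow 2 s).div_const 8).const_add 0
      have h2 : HasDerivAt (fun s : ℝ => s * m) m s := by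
        simpa using (hasDerivAt_id s).mul_const m
      exact (h2.add ((hasDerivAt_pow 2 s).div_const 8)).congr_deriv (by norm_num; ring)
    have h3 : HasDerivAt (fun s => Real.log (D s)) (m * exp s / D s) s :=
      (hD' s).log (hD s).ne'
    exact h1.sub h3
  have hh' : ∀ s, HasDerivAt h (1 / 4 - (m * exp s * D s - m * exp s * (m * exp s)) / (D s) ^ 2) s := by
    intro s
    have h4 : HasDerivAt (fun s => m * exp s / D s)
        ((m * exp s * D s - m * exp s * (m * exp s)) / (D s) ^ 2) s :=
      ((Real.hasDerivAt_exp s).const_mul m).div (hD' s) (hD s).ne'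
    have h5 : HasDerivAt (fun s : ℝ => m + s / 4) (1 / 4) s := by
      simpa using ((hasDerivAt_id s).div_const 4).const_add m
    exact h5.sub h4
  have hh'nonneg : ∀ s, 0 ≤ 1 / 4 - (m * exp s * D s - m * exp s * (m * exp s)) / (D s) ^ 2 := by
    intro s
    set p : ℝ := m * exp s / D s with hp_def
    have hDs := hD s
    have key : (m * exp s * D s - m * exp s * (m * exp s)) / (D s) ^ 2 = p - p ^ 2 := by
      rw [hp_def]; field_simp
    rw [key]
    nlinarith [sq_nonneg (p - 1 / 2)]
  have hhmono : Monotone h := by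
    apply monotone_of_deriv_nonneg
    · exact fun s => (hh' s).differentiableAt
    · intro s; rw [(hh' s).deriv]; exact hh'nonneg s
  have hh0 : h 0 = 0 := by simp [hh_def, hD_def]
  have hhnonneg : ∀ s, 0 ≤ s → 0 ≤ h s := by
    intro s hs; rw [← hh0]; exact hhmono hs
  have hgmono : MonotoneOn g (Set.Ici 0) := by
    apply monotoneOn_of_deriv_nonneg (convex_Ici 0)
    · exact (Continuous.continuousOn (by
        exact continuous_iff_continuousAt.2 fun s => (hg' s).continuousAt))
    · intro s hs
      exact ((hg' s).differentiableAt).differentiableWithinAt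
    · intro s hs
      rw [(hg' s).deriv]
      exact hhnonneg s (le_of_lt (by simpa using hs))
  have hg0 : g 0 = 0 := by simp [hg_def, hD_def]
  have : 0 ≤ g t := by
    rw [← hg0]
    exact hgmono (Set.self_mem_Ici) (Set.mem_Ici.2 ht) ht
  have hlog : Real.log (D t) ≤ t * m + t ^ 2 / 8 := by
    simp only [hg_def] at this; linarith
  calc D t ≤ exp (Real.log (D t)) := by rw [Real.exp_log (hD t)]
    _ ≤ exp (t * m + t ^ 2 / 8) := exp_le_exp.2 hlog

lemma map_subfamily_pi {Ω E ι : Type*} [MeasurableSpace Ω] [MeasurableSpace E]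
    [Fintype ι] {N : ℕ}
    (P : Measure Ω) [IsProbabilityMeasure P]
    (W : Fin N → Ω → E) (hWmeas : ∀ i, Measurable (W i))
    (hWindep : iIndepFun W P)
    (μ : Measure E) [IsProbabilityMeasure μ] (hWlaw : ∀ i, P.map (W i) = μ)
    (g : ι → Fin N) (hg : Function.Injective g) :
    P.map (fun ω i => W (g i) ω) = Measure.pi (fun _ => μ) := by
  classical
  have hf : Measurable (fun ω i => W (g i) ω) :=
    measurable_pi_lambda _ fun i => hWmeas (g i)
  refine (Measure.pi_eq fun s hs => ?_).symm
  rw [Measure.map_apply hf (MeasurableSet.univ_pi hs)]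
  set sets : Fin N → Set E := fun j => if h : ∃ i, g i = j then s h.choose else Set.univ
    with hsets_def
  have hsets_g : ∀ i, sets (g i) = s i := by
    intro i
    have he : ∃ i', g i' = g i := ⟨i, rfl⟩
    simp only [hsets_def, dif_pos he, hg he.choose_spec]
  have hpre : (fun ω i => W (g i) ω) ⁻¹' Set.pi Set.univ s
      = ⋂ j ∈ (Finset.univ.image g), W j ⁻¹' sets j := by
    ext ω
    simp only [Set.mem_preimage, Set.mem_pi, Set.mem_univ, forall_true_left, Set.mem_iInter,
      Finset.mem_image, Finset.mem_univ, true_and]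
    constructor
    · rintro h j ⟨i, rfl⟩
      rw [hsets_g i]; exact h i
    · intro h i
      have := h (g i) ⟨i, rfl⟩
      rwa [hsets_g i] at this
  rw [hpre, hWindep.measure_inter_preimage_eq_mul _ ?_]
  · rw [Finset.prod_image (fun a _ b _ h => hg h)]
    refine Finset.prod_congr rfl fun i _ => ?_
    rw [hsets_g i, ← hWlaw (g i), Measure.map_apply (hWmeas (g i)) (hs i)]
  · intro j hj
    by_cases h : ∃ i, g i = j
    · simp only [hsets_def, dif_pos h]; exact hs h.choose
    · simp only [hsets_def, dif_neg h]; exact MeasurableSet.univ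

lemma pi_inter_eval {E : Type*} [MeasurableSpace E] {n : ℕ}
    (κ : Measure E) [IsProbabilityMeasure κ] (S : Finset (Fin n)) (T : Fin n → Set E)
    (hT : ∀ i, MeasurableSet (T i)) :
    Measure.pi (fun _ : Fin n => κ) (⋂ i ∈ S, (fun b : Fin n → E => b i) ⁻¹' T i)
      = ∏ i ∈ S, κ (T i) := by
  classical
  have h1 : (⋂ i ∈ S, (fun b : Fin n → E => b i) ⁻¹' T i)
      = Set.pi Set.univ (fun i => if i ∈ S then T i else Set.univ) := by
    ext b
    simp only [Set.mem_iInter, Set.mem_preimage, Set.mem_pi, Set.mem_univ, forall_true_left]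
    constructor
    · intro h i
      by_cases hi : i ∈ S
      · rw [if_pos hi]; exact h i hi
      · rw [if_neg hi]; trivial
    · intro h i hi
      have := h i; rwa [if_pos hi] at this
  rw [h1, Measure.pi_pi]
  have h2 : ∀ i : Fin n, κ (if i ∈ S then T i else Set.univ)
      = if i ∈ S then κ (T i) else 1 := by
    intro i; by_cases hi : i ∈ S <;> simp [hi]
  simp_rw [h2]
  rw [Finset.prod_ite_mem, Finset.univ_inter]

lemma iIndepFun_eval {E : Type*} [MeasurableSpace E] {n : ℕ}
    (κ : Measure E) [IsProbabilityMeasure κ] :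
    iIndepFun (fun (i : Fin n) (b : Fin n → E) => b i)
      (Measure.pi (fun _ : Fin n => κ)) := by
  classical
  rw [iIndepFun_iff_measure_inter_preimage_eq_mul]
  intro S sets hsets
  set T : Fin n → Set E := fun i => if i ∈ S then sets i else Set.univ with hT_def
  have hT : ∀ i, MeasurableSet (T i) := by
    intro i
    by_cases hi : i ∈ S
    · simp only [hT_def, if_pos hi]; exact hsets i hi
    · simp only [hT_def, if_neg hi]; exact MeasurableSet.univ
  have heq : (⋂ i ∈ S, (fun b : Fin n → E => b i) ⁻¹' sets i)
      = ⋂ i ∈ S, (fun b : Fin n → E => b i) ⁻¹' T i := by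
    apply Set.iInter₂_congr
    intro i hi; simp only [hT_def, if_pos hi]
  rw [heq, pi_inter_eval κ S T hT]
  refine Finset.prod_congr rfl fun i hi => ?_
  have := pi_inter_eval κ {i} T hT
  simp only [Finset.mem_singleton, Set.iInter_iInter_eq_left, Finset.prod_singleton] at this
  have hTi : ((fun b : Fin n → E => b i) ⁻¹' sets i) = ((fun b : Fin n → E => b i) ⁻¹' T i) := by
    simp only [hT_def, if_pos hi]
  rw [hTi, this]

lemma map_eval_pi {E : Type*} [MeasurableSpace E] {n : ℕ}
    (κ : Measure E) [IsProbabilityMeasure κ] (i : Fin n) :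
    (Measure.pi (fun _ : Fin n => κ)).map (fun b => b i) = κ := by
  refine Measure.ext fun A hA => ?_
  rw [Measure.map_apply (measurable_pi_apply i) hA]
  have := pi_inter_eval κ {i} (fun _ => A) (fun _ => hA)
  simpa using this

lemma hoeffding_pi {E : Type*} [MeasurableSpace E] {n : ℕ}
    (κ : Measure E) [IsProbabilityMeasure κ] (S : Set E) (hS : MeasurableSet S)
    (ε : ℝ) (hε : 0 < ε) :
    Measure.pi (fun _ : Fin n => κ)
      {b | (n : ℝ) * ((κ S).toReal + ε) ≤ ∑ i : Fin n, S.indicator 1 (b i)}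
      ≤ ENNReal.ofReal (Real.exp (-2 * ε ^ 2 * n)) := by
  classical
  set Pm := Measure.pi (fun _ : Fin n => κ) with hPm_def
  haveI : IsProbabilityMeasure Pm := by rw [hPm_def]; infer_instance
  set m : ℝ := (κ S).toReal with hm_def
  have hm0 : 0 ≤ m := ENNReal.toReal_nonneg
  have hm1 : m ≤ 1 := by
    rw [hm_def]
    exact ENNReal.toReal_le_of_le_ofReal one_pos.le (by simpa using prob_le_one)
  set φ : E → ℝ := fun q => S.indicator 1 q - m with hφ_def
  have hφ : Measurable φ := (measurable_one.indicator hS).sub measurable_const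
  set X : Fin n → (Fin n → E) → ℝ := fun i b => φ (b i) with hX_def
  have hXmeas : ∀ i, Measurable (X i) := fun i => hφ.comp (measurable_pi_apply i)
  have hXindep : iIndepFun X Pm :=
    (iIndepFun_eval κ).comp (fun _ => φ) (fun _ => hφ)
  have hind01 : ∀ q : E, 0 ≤ S.indicator (1 : E → ℝ) q ∧ S.indicator (1 : E → ℝ) q ≤ 1 := by
    intro q
    by_cases hq : q ∈ S <;> simp [Set.indicator_of_mem, Set.indicator_of_notMem, hq]
  set Xs : (Fin n → E) → ℝ := fun b => ∑ i, X i b with hXs_def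
  have hfun : (∑ i, X i) = Xs := funext fun b => Finset.sum_apply _ _ _
  have hXsmeas : Measurable Xs := Finset.measurable_sum Finset.univ fun i _ => hXmeas i
  have hevent : {b : Fin n → E | (n : ℝ) * (m + ε) ≤ ∑ i : Fin n, S.indicator 1 (b i)}
      = {b | (n : ℝ) * ε ≤ Xs b} := by
    ext b
    simp only [Set.mem_setOf_eq, hXs_def, hX_def, hφ_def]
    rw [Finset.sum_sub_distrib, Finset.sum_const, Finset.card_univ, Fintype.card_fin,
      nsmul_eq_mul]
    constructor <;> intro h <;> nlinarith
  set t : ℝ := 4 * ε with ht_def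
  have ht : 0 ≤ t := by positivity
  -- integrability
  have hXsum_le : ∀ b, Xs b ≤ n := by
    intro b
    simp only [hXs_def]
    calc Xs b ≤ ∑ i : Fin n, (1 : ℝ) := by
          refine Finset.sum_le_sum fun i _ => ?_
          simp only [hX_def, hφ_def]
          have := (hind01 (b i)).2
          linarith
      _ = n := by simp
  have h_int : Integrable (fun b => exp (t * Xs b)) Pm := by
    refine Integrable.mono' (integrable_const (exp (t * n)))
      (((hXsmeas.const_mul t).exp).aestronglyMeasurable)
      (ae_of_all _ fun b => ?_)
    rw [Real.norm_eq_abs, Real.abs_exp]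
    exact exp_le_exp.2 (mul_le_mul_of_nonneg_left (hXsum_le b) ht)
  have hcher := measure_ge_le_exp_mul_mgf (μ := Pm) (X := Xs) ((n : ℝ) * ε) ht h_int
  have hmgf_sum := hXindep.mgf_sum (t := t) hXmeas Finset.univ
  rw [hfun] at hmgf_sum
  -- mgf of each X i
  have hmgf_each : ∀ i, mgf (X i) Pm t ≤ exp (t ^ 2 / 8) := by
    intro i
    have hmap : Pm.map (fun b => b i) = κ := map_eval_pi κ i
    have h1 : mgf (X i) Pm t = ∫ q, exp (t * φ q) ∂κ := by
      rw [mgf, ← hmap, integral_map (measurable_pi_apply i).aemeasurable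
        (((hφ.const_mul t).exp).aestronglyMeasurable)]
    have h2 : ∀ q, exp (t * φ q)
        = exp (-(t * m)) * (S.indicator (fun _ => exp t) q + Sᶜ.indicator (fun _ => (1:ℝ)) q) := by
      intro q
      by_cases hq : q ∈ S
      · rw [Set.indicator_of_mem hq, Set.indicator_of_notMem (by simpa using hq)]
        rw [add_zero, ← Real.exp_add]
        congr 1
        simp only [hφ_def, Set.indicator_of_mem hq, Pi.one_apply]
        ring
      · rw [Set.indicator_of_notMem hq, Set.indicator_of_mem (by simpa using hq)]
        rw [zero_add, mul_one]
        congr 1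
        simp only [hφ_def, Set.indicator_of_notMem hq]
        ring
    have h3 : mgf (X i) Pm t = exp (-(t * m)) * (exp t * m + (1 - m)) := by
      rw [h1]
      simp_rw [h2]
      rw [integral_const_mul, integral_add ((integrable_const (exp t)).indicator hS)
        ((integrable_const (1:ℝ)).indicator hS.compl),
        integral_indicator_const _ hS, integral_indicator_const _ hS.compl,
        probReal_compl_eq_one_sub hS]
      simp only [hm_def, measureReal_def, smul_eq_mul]
      ring
    rw [h3]
    calc exp (-(t * m)) * (exp t * m + (1 - m))
        = exp (-(t * m)) * (1 - m + m * exp t) := by ring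
      _ ≤ exp (-(t * m)) * exp (t * m + t ^ 2 / 8) := by
          exact mul_le_mul_of_nonneg_left (bern_mgf_core hm0 hm1 t ht) (exp_pos _).le
      _ = exp (t ^ 2 / 8) := by rw [← Real.exp_add]; ring_nf
  -- combine
  have hprod : ∏ i : Fin n, mgf (X i) Pm t ≤ exp (t ^ 2 / 8) ^ n := by
    calc ∏ i : Fin n, mgf (X i) Pm t ≤ ∏ _i : Fin n, exp (t ^ 2 / 8) :=
          Finset.prod_le_prod (fun i _ => mgf_nonneg) (fun i _ => hmgf_each i)
      _ = exp (t ^ 2 / 8) ^ n := by simp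
  have hfinal : (Pm {b | (n : ℝ) * ε ≤ Xs b}).toReal ≤ exp (-2 * ε ^ 2 * n) := by
    calc (Pm {b | (n : ℝ) * ε ≤ Xs b}).toReal
        ≤ exp (-t * ((n : ℝ) * ε)) * mgf Xs Pm t := hcher
      _ ≤ exp (-t * ((n : ℝ) * ε)) * exp (t ^ 2 / 8) ^ n := by
          rw [hmgf_sum]
          exact mul_le_mul_of_nonneg_left hprod (exp_pos _).le
      _ = exp (-2 * ε ^ 2 * n) := by
          rw [← Real.exp_nat_mul, ← Real.exp_add]
          congr 1
          simp only [ht_def]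
          ring
  rw [hevent]
  calc Pm {b | (n : ℝ) * ε ≤ Xs b}
      = ENNReal.ofReal ((Pm {b | (n : ℝ) * ε ≤ Xs b}).toReal) :=
        (ENNReal.ofReal_toReal (measure_ne_top _ _)).symm
    _ ≤ ENNReal.ofReal (exp (-2 * ε ^ 2 * n)) := ENNReal.ofReal_le_ofReal hfinal

lemma ncard_eq_sum_indicator {n : ℕ} (c : Set (Fin n)) :
    ((c.ncard : ℝ)) = ∑ i, c.indicator 1 i := by
  classical
  rw [Set.ncard_eq_toFinset_card' c]
  have h1 : c.toFinset.card = (Finset.univ.filter (fun i => i ∈ c)).card := by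
    congr 1; ext i; simp
  rw [h1]
  rw [Finset.card_filter]
  push_cast
  refine Finset.sum_congr rfl fun i _ => ?_
  by_cases hi : i ∈ c <;> simp [Set.indicator_apply, hi]

/-- **Theorem 2, PAV guarantee.** Training data `D₁` (the first
`n₁` i.i.d. pairs), holdout data `D₂` (the next `n₂` pairs), and a test pair
(the last pair) are i.i.d. with law `μ` on `ℝ^d × ℝ`.  `G ⊆ [0,1]` is a finite
grid with `0 ∈ G` and `|G| = K + 1`; for each `τ ∈ G`, `L_τ, U_τ` are
measurable `[-∞,∞]`-valued interval bounds fit on `D₁`, with `L₀ ≡ -∞` and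
`U₀ ≡ +∞`.  With `p̂(τ)` the empirical coverage on `D₂`,
`τ̂ = max{τ ∈ G : p̂(τ) ≥ 1-α}`, and `p(D)` the conditional coverage
probability of the selected interval given the data (i.e. `μ` of the selected
region with `D₁` and `τ̂` plugged in), for every `ε > 0`,
`P(p(D) ≤ 1 - α - ε) ≤ K·exp(-2ε²n₂)`. -/
theorem pav_guarantee
    {Ω : Type*} [MeasurableSpace Ω] (P : Measure Ω) [IsProbabilityMeasure P]
    (d n₁ n₂ K : ℕ) (hd : 1 ≤ d) (hn₁ : 1 ≤ n₁) (hn₂ : 1 ≤ n₂)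
    (μ : Measure ((Fin d → ℝ) × ℝ)) [IsProbabilityMeasure μ]
    (W : Fin (n₁ + n₂ + 1) → Ω → (Fin d → ℝ) × ℝ)
    (hWmeas : ∀ i, Measurable (W i))
    (hWindep : iIndepFun W P)
    (hWlaw : ∀ i, P.map (W i) = μ)
    (G : Finset ℝ) (hGsub : ↑G ⊆ Set.Icc (0 : ℝ) 1) (hG0 : (0 : ℝ) ∈ G)
    (hGcard : G.card = K + 1)
    (L U : ℝ → (Fin n₁ → (Fin d → ℝ) × ℝ) × (Fin d → ℝ) → EReal)
    (hLmeas : ∀ τ ∈ G, Measurable (L τ)) (hUmeas : ∀ τ ∈ G, Measurable (U τ))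
    (hL0 : ∀ q, L 0 q = ⊥) (hU0 : ∀ q, U 0 q = ⊤)
    (α : ℝ) (hα : α ∈ Set.Ioo (0 : ℝ) 1)
    (D₁ : Ω → Fin n₁ → (Fin d → ℝ) × ℝ)
    (hD₁ : D₁ = fun ω (i : Fin n₁) => W (i.castLE (by omega)) ω)
    (D₂ : Ω → Fin n₂ → (Fin d → ℝ) × ℝ)
    (hD₂ : D₂ = fun ω (i : Fin n₂) => W ⟨n₁ + i.1, by have := i.2; omega⟩ ω)
    (phat : ℝ → Ω → ℝ)
    (hphat : phat = fun τ ω =>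
      (({i : Fin n₂ | L τ (D₁ ω, (D₂ ω i).1) ≤ ((D₂ ω i).2 : EReal) ∧
          ((D₂ ω i).2 : EReal) ≤ U τ (D₁ ω, (D₂ ω i).1)}).ncard : ℝ) / n₂)
    (τhat : Ω → ℝ)
    (hτhat : τhat = fun ω => sSup {τ : ℝ | τ ∈ G ∧ 1 - α ≤ phat τ ω})
    (p : Ω → ℝ)
    (hp : p = fun ω => (μ {q : (Fin d → ℝ) × ℝ |
      L (τhat ω) (D₁ ω, q.1) ≤ (q.2 : EReal) ∧
        (q.2 : EReal) ≤ U (τhat ω) (D₁ ω, q.1)}).toReal)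
    (ε : ℝ) (hε : 0 < ε) :
    (P {ω | p ω ≤ 1 - α - ε}).toReal ≤ K * Real.exp (-2 * ε ^ 2 * n₂) := by
  classical
  -- the coverage region and its measurability
  set SS : ℝ → Set ((Fin n₁ → ((Fin d → ℝ) × ℝ)) × ((Fin d → ℝ) × ℝ)) := fun τ =>
    {x | L τ (x.1, x.2.1) ≤ (x.2.2 : EReal) ∧ (x.2.2 : EReal) ≤ U τ (x.1, x.2.1)} with hSS_def
  have hSSmeas : ∀ τ ∈ G, MeasurableSet (SS τ) := by
    intro τ hτ
    have h1 : Measurable fun x : (Fin n₁ → ((Fin d → ℝ) × ℝ)) × ((Fin d → ℝ) × ℝ) => L τ (x.1, x.2.1) :=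
      (hLmeas τ hτ).comp' (measurable_fst.prodMk measurable_snd.fst)
    have h1' : Measurable fun x : (Fin n₁ → ((Fin d → ℝ) × ℝ)) × ((Fin d → ℝ) × ℝ) => U τ (x.1, x.2.1) :=
      (hUmeas τ hτ).comp' (measurable_fst.prodMk measurable_snd.fst)
    have h2 : Measurable fun x : (Fin n₁ → ((Fin d → ℝ) × ℝ)) × ((Fin d → ℝ) × ℝ) => ((x.2.2 : ℝ) : EReal) :=
      measurable_snd.snd.coe_real_ereal
    apply MeasurableSet.inter
    · exact measurableSet_le (α := EReal) h1 h2
    · exact measurableSet_le (α := EReal) h2 h1'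
  set cov : ℝ → (Fin n₁ → ((Fin d → ℝ) × ℝ)) → ℝ := fun τ a => (μ (Prod.mk a ⁻¹' SS τ)).toReal with hcov_def
  have hcovmeas : ∀ τ ∈ G, Measurable (cov τ) := fun τ hτ =>
    (measurable_measure_prodMk_left (hSSmeas τ hτ)).ennreal_toReal
  have hD₁meas : Measurable D₁ := by
    rw [hD₁]; exact measurable_pi_lambda _ fun i => hWmeas _
  have hD₂meas : Measurable D₂ := by
    rw [hD₂]; exact measurable_pi_lambda _ fun i => hWmeas _
  have hn₂pos : (0 : ℝ) < n₂ := by exact_mod_cast hn₂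
  -- empirical coverage as a sum of indicators
  set Fsum : ℝ → (Fin n₁ → ((Fin d → ℝ) × ℝ)) × (Fin n₂ → ((Fin d → ℝ) × ℝ)) → ℝ := fun τ x =>
    ∑ i, (SS τ).indicator 1 (x.1, x.2 i) with hFsum_def
  have hkey : ∀ τ ω, phat τ ω = Fsum τ (D₁ ω, D₂ ω) / n₂ := by
    intro τ ω
    simp only [hphat]
    congr 1
    rw [ncard_eq_sum_indicator]
    refine Finset.sum_congr rfl fun i _ => ?_
    by_cases hi : (D₁ ω, D₂ ω i) ∈ SS τ
    · rw [Set.indicator_of_mem hi, Set.indicator_of_mem (by exact hi)]; rfl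
    · rw [Set.indicator_of_notMem hi, Set.indicator_of_notMem (by exact hi)]
  -- p ω = cov (τhat ω) (D₁ ω)
  have hpcov : ∀ ω, p ω = cov (τhat ω) (D₁ ω) := by intro ω; simp only [hp]; rfl
  have hcov0 : ∀ a, cov 0 a = 1 := by
    intro a
    have : Prod.mk a ⁻¹' SS 0 = Set.univ := by
      ext q; simp [hSS_def, hL0, hU0]
    rw [hcov_def]
    simp only [this, measure_univ, ENNReal.toReal_one]
  have hphat0 : ∀ ω, phat 0 ω = 1 := by
    intro ω
    simp only [hphat]
    have : {i : Fin n₂ | L 0 (D₁ ω, (D₂ ω i).1) ≤ ((D₂ ω i).2 : EReal) ∧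
        ((D₂ ω i).2 : EReal) ≤ U 0 (D₁ ω, (D₂ ω i).1)} = Set.univ := by
      ext i; simp [hL0, hU0]
    rw [this, Set.ncard_univ]
    simp only [Nat.card_eq_fintype_card, Fintype.card_fin]
    exact div_self hn₂pos.ne'
  -- reduction to union of per-τ bad events
  set A : ℝ → Set Ω := fun τ => {ω | cov τ (D₁ ω) + ε ≤ phat τ ω} with hA_def
  have hincl : {ω | p ω ≤ 1 - α - ε} ⊆ ⋃ τ ∈ (G.erase 0), A τ := by
    intro ω hω
    simp only [Set.mem_setOf_eq] at hω
    have hTfin : ({τ : ℝ | τ ∈ G ∧ 1 - α ≤ phat τ ω}).Finite :=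
      G.finite_toSet.subset fun τ hτ => hτ.1
    have h0T : (0 : ℝ) ∈ {τ : ℝ | τ ∈ G ∧ 1 - α ≤ phat τ ω} :=
      ⟨hG0, by rw [hphat0]; linarith [hα.1]⟩
    have hmem : τhat ω ∈ {τ : ℝ | τ ∈ G ∧ 1 - α ≤ phat τ ω} := by
      rw [hτhat]
      exact Set.Nonempty.csSup_mem ⟨0, h0T⟩ hTfin
    obtain ⟨hτG, hτphat⟩ := hmem
    have hτne : τhat ω ≠ 0 := by
      intro h0
      have := hpcov ω
      rw [h0, hcov0] at this
      rw [this] at hω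
      linarith [hα.1]
    refine Set.mem_biUnion (Finset.mem_coe.mpr (Finset.mem_erase.mpr ⟨hτne, hτG⟩)) ?_
    simp only [hA_def, Set.mem_setOf_eq]
    have := hpcov ω
    rw [this] at hω
    linarith
  -- per-τ bound
  have hbound : ∀ τ ∈ G.erase 0, P (A τ) ≤ ENNReal.ofReal (Real.exp (-2 * ε ^ 2 * n₂)) := by
    intro τ hτe
    have hτG : τ ∈ G := Finset.mem_of_mem_erase hτe
    -- laws of D₁, D₂
    have hmapD₁ : P.map D₁ = Measure.pi (fun _ : Fin n₁ => μ) := by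
      rw [hD₁]
      exact map_subfamily_pi P W hWmeas hWindep μ hWlaw _ (Fin.castLE_injective _)
    have hmapD₂ : P.map D₂ = Measure.pi (fun _ : Fin n₂ => μ) := by
      rw [hD₂]
      refine map_subfamily_pi P W hWmeas hWindep μ hWlaw _ ?_
      intro a b hab
      have : n₁ + a.1 = n₁ + b.1 := congrArg Fin.val hab
      ext; omega
    -- independence of D₁ and D₂
    have hindep : IndepFun D₁ D₂ P := by
      set S₁ : Finset (Fin (n₁ + n₂ + 1)) :=
        Finset.univ.image (fun i : Fin n₁ => i.castLE (by omega)) with hS₁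
      set S₂ : Finset (Fin (n₁ + n₂ + 1)) :=
        Finset.univ.image (fun i : Fin n₂ =>
          (⟨n₁ + i.1, by have := i.2; omega⟩ : Fin (n₁ + n₂ + 1))) with hS₂
      have hdisj : Disjoint S₁ S₂ := by
        rw [Finset.disjoint_left]
        intro j hj₁ hj₂
        simp only [hS₁, hS₂, Finset.mem_image, Finset.mem_univ, true_and] at hj₁ hj₂
        obtain ⟨i₁, rfl⟩ := hj₁
        obtain ⟨i₂, hi₂⟩ := hj₂
        have h1 : (i₁.castLE (by omega : n₁ ≤ n₁ + n₂ + 1) : Fin _).1 = i₁.1 := rfl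
        have := congrArg Fin.val hi₂
        simp only [h1] at this
        have := i₁.2
        omega
      have base := hWindep.indepFun_finset S₂ S₁ hdisj.symm hWmeas
      have base' := hWindep.indepFun_finset S₁ S₂ hdisj hWmeas
      have hr₁ : Measurable fun (v : ↥S₁ → ((Fin d → ℝ) × ℝ)) (i : Fin n₁) =>
          v ⟨i.castLE (by omega), by simp [hS₁]⟩ :=
        measurable_pi_lambda _ fun i => measurable_pi_apply _
      have hr₂ : Measurable fun (v : ↥S₂ → ((Fin d → ℝ) × ℝ)) (i : Fin n₂) =>
          v ⟨⟨n₁ + i.1, by have := i.2; omega⟩, by simp [hS₂]⟩ :=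
        measurable_pi_lambda _ fun i => measurable_pi_apply _
      have := base'.comp hr₁ hr₂
      rw [hD₁, hD₂]
      exact this
    have hjoint : P.map (fun ω => (D₁ ω, D₂ ω))
        = (Measure.pi (fun _ : Fin n₁ => μ)).prod (Measure.pi (fun _ : Fin n₂ => μ)) := by
      rw [← hmapD₁, ← hmapD₂]
      exact (indepFun_iff_map_prod_eq_prod_map_map hD₁meas.aemeasurable
        hD₂meas.aemeasurable).mp hindep
    -- the bad set in the product space
    set B : Set ((Fin n₁ → ((Fin d → ℝ) × ℝ)) × (Fin n₂ → ((Fin d → ℝ) × ℝ))) := {x | cov τ x.1 + ε ≤ Fsum τ x / n₂}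
      with hB_def
    have hFmeas : Measurable (Fsum τ) := by
      refine Finset.measurable_sum Finset.univ fun i _ => ?_
      exact (measurable_one.indicator (hSSmeas τ hτG)).comp'
        (measurable_fst.prodMk ((measurable_pi_apply i).comp' measurable_snd))
    have hBmeas : MeasurableSet B :=
      measurableSet_le (((hcovmeas τ hτG).comp' measurable_fst).add_const ε)
        (hFmeas.div_const _)
    have hAeq : A τ = (fun ω => (D₁ ω, D₂ ω)) ⁻¹' B := by
      ext ω
      simp only [hA_def, hB_def, Set.mem_setOf_eq, Set.mem_preimage]
      rw [hkey τ ω]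
    have hPA : P (A τ)
        = ((Measure.pi (fun _ : Fin n₁ => μ)).prod (Measure.pi (fun _ : Fin n₂ => μ))) B := by
      rw [hAeq, ← hjoint, Measure.map_apply (hD₁meas.prodMk hD₂meas) hBmeas]
    have : IsFiniteMeasure (Measure.pi fun _ : Fin n₂ => μ) := inferInstance
    rw [hPA, Measure.prod_apply hBmeas]
    have hsec : ∀ a : Fin n₁ → ((Fin d → ℝ) × ℝ),
        (Measure.pi (fun _ : Fin n₂ => μ)) (Prod.mk a ⁻¹' B)
          ≤ ENNReal.ofReal (Real.exp (-2 * ε ^ 2 * n₂)) := by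
      intro a
      have hseceq : Prod.mk a ⁻¹' B
          = {b : Fin n₂ → ((Fin d → ℝ) × ℝ) | (n₂ : ℝ) * ((μ (Prod.mk a ⁻¹' SS τ)).toReal + ε)
              ≤ ∑ i, (Prod.mk a ⁻¹' SS τ).indicator 1 (b i)} := by
        ext b
        simp only [hB_def, Set.mem_preimage, Set.mem_setOf_eq]
        have hind : ∀ i : Fin n₂, (SS τ).indicator (1 : ((Fin n₁ → ((Fin d → ℝ) × ℝ)) × ((Fin d → ℝ) × ℝ)) → ℝ) (a, b i)
            = (Prod.mk a ⁻¹' SS τ).indicator 1 (b i) := by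
          intro i
          by_cases hi : (a, b i) ∈ SS τ
          · rw [Set.indicator_of_mem hi, Set.indicator_of_mem (by exact hi)]; rfl
          · rw [Set.indicator_of_notMem hi, Set.indicator_of_notMem (by exact hi)]
        rw [hFsum_def]
        simp only
        rw [Finset.sum_congr rfl fun i _ => hind i]
        rw [hcov_def]
        constructor
        · intro h
          have := (le_div_iff₀ hn₂pos).mp h
          linarith [this]
        · intro h
          rw [le_div_iff₀ hn₂pos]
          linarith
      rw [hseceq]
      exact hoeffding_pi μ (Prod.mk a ⁻¹' SS τ)
        ((hSSmeas τ hτG).preimage measurable_prodMk_left) ε hε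
    calc ∫⁻ a, (Measure.pi (fun _ : Fin n₂ => μ)) (Prod.mk a ⁻¹' B)
          ∂(Measure.pi (fun _ : Fin n₁ => μ))
        ≤ ∫⁻ _, ENNReal.ofReal (Real.exp (-2 * ε ^ 2 * n₂))
          ∂(Measure.pi (fun _ : Fin n₁ => μ)) := lintegral_mono hsec
      _ = ENNReal.ofReal (Real.exp (-2 * ε ^ 2 * n₂)) := by
          rw [lintegral_const, measure_univ, mul_one]
  -- union bound and conclusion
  have hP : P {ω | p ω ≤ 1 - α - ε}
      ≤ (K : ENNReal) * ENNReal.ofReal (Real.exp (-2 * ε ^ 2 * n₂)) := by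
    calc P {ω | p ω ≤ 1 - α - ε} ≤ P (⋃ τ ∈ (G.erase 0), A τ) := measure_mono hincl
      _ ≤ ∑ τ ∈ G.erase 0, P (A τ) := measure_biUnion_finset_le _ _
      _ ≤ ∑ _τ ∈ G.erase 0, ENNReal.ofReal (Real.exp (-2 * ε ^ 2 * n₂)) :=
          Finset.sum_le_sum hbound
      _ = (K : ENNReal) * ENNReal.ofReal (Real.exp (-2 * ε ^ 2 * n₂)) := by
          rw [Finset.sum_const, Finset.card_erase_of_mem hG0, hGcard]
          simp [nsmul_eq_mul]
  calc (P {ω | p ω ≤ 1 - α - ε}).toReal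
      ≤ ((K : ENNReal) * ENNReal.ofReal (Real.exp (-2 * ε ^ 2 * n₂))).toReal := by
        refine ENNReal.toReal_mono ?_ hP
        exact ENNReal.mul_ne_top (ENNReal.natCast_ne_top K) ENNReal.ofReal_ne_top
    _ = K * Real.exp (-2 * ε ^ 2 * n₂) := by
        rw [ENNReal.toReal_mul, ENNReal.toReal_ofReal (Real.exp_nonneg _)]
        simp
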